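/- In the same setting, using additionally the recurrence φ_α(z) = (1/d_{0,α})·S_α(z) - (γ_{0,α}/d_{0,α})·φ_{prec(α)}^#(z) with S_α(0) = 0, one has φ_α(0) = -γ_{0,α}·Π_{0⪯β⪯α} d_{0,β}^{-1}, and for every α ∈ ℕ₀^d: Σ_{0⪯β⪯α} |φ_β(0)|² = Π_{0⪯β⪯α} (1 - |γ_{0,β}|²)^{-1}. -/

import Mathlib

open MvPolynomial

noncomputable section

lemma stmt15_aux (x : ℝ) (hx : ‖x‖ < 1) : (0:ℝ) < 1 - x ^ 2 := by
  nlinarith [abs_nonneg x, sq_abs x, (abs_lt.mp (by simpa using hx)).1,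
    (abs_lt.mp (by simpa using hx)).2]

/-- values at the origin of the orthonormal polynomials. In the setting of
the previous statement (shortlex enumeration by `ℕ`, Verblunsky coefficients `γ n` with
`|γ n| < 1`, `γ 0 = 0`, `d_{0,α} = √(1-|γ n|²)`, sharp polynomials with
`φ_α^#(0) = ∏_{β ⪯ α} d_{0,β}⁻¹`), if the orthonormal polynomials satisfy `φ_0 = 1` and
the recurrence `φ_α = (1/d_{0,α})·S_α - (γ_{0,α}/d_{0,α})·φ_{prec α}^#` with `S_α(0) = 0`,
then `φ_α(0) = -γ_{0,α}·∏_{β ⪯ α} d_{0,β}⁻¹` (for `α ≻ 0`) and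
`∑_{β ⪯ α} |φ_β(0)|² = ∏_{β ⪯ α} (1-|γ_{0,β}|²)⁻¹`. -/
theorem stmt15 (d : ℕ)
    (γ : ℕ → ℂ) (hγ : ∀ n, ‖γ n‖ < 1) (hγ0 : γ 0 = 0)
    (S φs φ : ℕ → MvPolynomial (Fin d) ℂ)
    (hS : ∀ n, (S n).coeff 0 = 0)
    (hφs : ∀ n : ℕ, eval 0 (φs n)
      = ∏ k ∈ Finset.range (n + 1), (((Real.sqrt (1 - ‖γ k‖ ^ 2) : ℝ) : ℂ))⁻¹)
    (hφ0 : φ 0 = 1)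
    (hrec : ∀ n : ℕ, φ (n + 1) =
      (((Real.sqrt (1 - ‖γ (n + 1)‖ ^ 2) : ℝ) : ℂ))⁻¹ • S (n + 1)
      - (γ (n + 1) / ((Real.sqrt (1 - ‖γ (n + 1)‖ ^ 2) : ℝ) : ℂ)) • φs n) :
    (∀ n : ℕ, eval 0 (φ (n + 1)) =
      -γ (n + 1) * ∏ k ∈ Finset.range (n + 2), (((Real.sqrt (1 - ‖γ k‖ ^ 2) : ℝ) : ℂ))⁻¹) ∧
    (∀ n : ℕ, ∑ k ∈ Finset.range (n + 1), ‖eval (0 : Fin d → ℂ) (φ k)‖ ^ 2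
      = ∏ k ∈ Finset.range (n + 1), (1 - ‖γ k‖ ^ 2)⁻¹) := by
  -- positivity facts
  have hpos : ∀ k, (0:ℝ) < 1 - ‖γ k‖ ^ 2 := by
    intro k
    have := hγ k
    nlinarith [norm_nonneg (γ k)]
  have hsq : ∀ k, Real.sqrt (1 - ‖γ k‖ ^ 2) ^ 2 = 1 - ‖γ k‖ ^ 2 := fun k =>
    Real.sq_sqrt (hpos k).le
  have hsp : ∀ k, (0:ℝ) < Real.sqrt (1 - ‖γ k‖ ^ 2) := fun k =>
    Real.sqrt_pos.mpr (hpos k)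
  have hevalS : ∀ n, eval (0 : Fin d → ℂ) (S n) = 0 := by
    intro n
    rw [show (0 : Fin d → ℂ) = fun _ => 0 from rfl, eval_zero', constantCoeff_eq]
    exact hS n
  have h1 : ∀ n : ℕ, eval (0 : Fin d → ℂ) (φ (n + 1)) =
      -γ (n + 1) * ∏ k ∈ Finset.range (n + 2), (((Real.sqrt (1 - ‖γ k‖ ^ 2) : ℝ) : ℂ))⁻¹ := by
    intro n
    rw [hrec n]
    simp only [map_sub, smul_eval, hevalS, mul_zero, hφs n, zero_sub,
      Finset.prod_range_succ _ (n+1)]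
    field_simp
  have hprodnorm : ∀ m, ‖∏ k ∈ Finset.range m, (((Real.sqrt (1 - ‖γ k‖ ^ 2) : ℝ) : ℂ))⁻¹‖ ^ 2
      = ∏ k ∈ Finset.range m, (1 - ‖γ k‖ ^ 2)⁻¹ := by
    intro m
    rw [norm_prod, ← Finset.prod_pow]
    refine Finset.prod_congr rfl fun k _ => ?_
    rw [norm_inv, Complex.norm_real, Real.norm_eq_abs, abs_of_pos (hsp k), inv_pow, hsq k]
  refine ⟨h1, ?_⟩
  intro n
  induction n with
  | zero => simp [hφ0, hγ0]
  | succ n ih =>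
      rw [Finset.sum_range_succ, ih, h1 n, norm_mul, norm_neg, mul_pow, hprodnorm (n+2),
        Finset.prod_range_succ _ (n+1)]
      have h0 : (1 - ‖γ (n+1)‖ ^ 2) ≠ 0 := (hpos (n+1)).ne'
      set P := ∏ x ∈ Finset.range (n + 1), (1 - ‖γ x‖ ^ 2)⁻¹ with hP
      set a := 1 - ‖γ (n+1)‖ ^ 2 with ha
      have hg : ‖γ (n+1)‖ ^ 2 = 1 - a := by rw [ha]; ring
      rw [hg]
      field_simp
      ring

end
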